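/- Let A ∈ L(H) have closed range with Moore–Penrose inverse A⁺, and let X, Y ∈ L(K,H) with R(X) ⊆ R(A), R(Y) ⊆ R(A*), and X Y* A⁺ X Y* = X Y*. If Q ∈ L(H) is a self-adjoint idempotent with R(Q) = R(I − XY*A⁺), then A A⁺ − I + Q is a self-adjoint idempotent with range R((A − XY*)A⁺); that is, the orthogonal projection onto R((A − XY*)A⁺) equals A A⁺ − I + Q. -/

import Mathlib

open ContinuousLinearMap

/-- If `Q` is the orthogonal projection onto `R(I − XY*A⁺)`, then `A A⁺ − I + Q` is the
orthogonal projection onto `R((A − XY*)A⁺)`. -/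
theorem projection_onto_range_sub_comp
    {H K : Type*}
    [NormedAddCommGroup H] [InnerProductSpace ℂ H] [CompleteSpace H]
    [NormedAddCommGroup K] [InnerProductSpace ℂ K] [CompleteSpace K]
    (A Ap : H →L[ℂ] H)
    (hA : IsClosed (Set.range A))
    (h1 : A ∘L Ap ∘L A = A)
    (h2 : Ap ∘L A ∘L Ap = Ap)
    (h3 : ContinuousLinearMap.adjoint (A ∘L Ap) = A ∘L Ap)
    (h4 : ContinuousLinearMap.adjoint (Ap ∘L A) = Ap ∘L A)
    (X Y : K →L[ℂ] H)
    (hX : Set.range X ⊆ Set.range A)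
    (hY : Set.range Y ⊆ Set.range (ContinuousLinearMap.adjoint A))
    (hXY : (X ∘L ContinuousLinearMap.adjoint Y) ∘L Ap ∘L (X ∘L ContinuousLinearMap.adjoint Y)
      = X ∘L ContinuousLinearMap.adjoint Y)
    (Q : H →L[ℂ] H)
    (hQ1 : Q ∘L Q = Q) (hQ2 : ContinuousLinearMap.adjoint Q = Q)
    (hQ3 : Set.range Q
      = Set.range ((1 : H →L[ℂ] H) - (X ∘L ContinuousLinearMap.adjoint Y) ∘L Ap)) :
    (A ∘L Ap - 1 + Q) ∘L (A ∘L Ap - 1 + Q) = A ∘L Ap - 1 + Q ∧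
      ContinuousLinearMap.adjoint (A ∘L Ap - 1 + Q) = A ∘L Ap - 1 + Q ∧
      Set.range (A ∘L Ap - (1 : H →L[ℂ] H) + Q)
        = Set.range ((A - X ∘L ContinuousLinearMap.adjoint Y) ∘L Ap) := by
  set Bo : H →L[ℂ] H := X ∘L ContinuousLinearMap.adjoint Y with hBo
  set P : H →L[ℂ] H := A ∘L Ap with hPdef
  -- basic pointwise facts
  have h1' : ∀ x, A (Ap (A x)) = A x := fun x => by simpa using DFunLike.congr_fun h1 x
  have h2' : ∀ x, Ap (A (Ap x)) = Ap x := fun x => by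
    simpa [hPdef] using DFunLike.congr_fun h2 x
  have hXY' : ∀ x, Bo (Ap (Bo x)) = Bo x := fun x => by
    simpa using DFunLike.congr_fun hXY x
  have hQ1' : ∀ x, Q (Q x) = Q x := fun x => by simpa using DFunLike.congr_fun hQ1 x
  -- operator facts in `*` form
  have hPP : P * P = P := by
    ext x
    simp only [mul_apply, hPdef, comp_apply]
    exact h1' (Ap x)
  have hPBo : P * Bo = Bo := by
    ext x
    have hmem : Bo x ∈ Set.range A := by
      rw [hBo]
      exact hX ⟨(ContinuousLinearMap.adjoint Y) x, rfl⟩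
    obtain ⟨h, hh⟩ := hmem
    simp only [ContinuousLinearMap.mul_apply, hPdef, comp_apply, ← hh]
    exact h1' h
  set E : H →L[ℂ] H := Bo ∘L Ap with hEdef
  have hEm : E = Bo * Ap := rfl
  have hPE : P * E = E := by
    rw [hEm, ← mul_assoc, hPBo]
  have hEP : E * P = E := by
    ext x
    simp only [ContinuousLinearMap.mul_apply, hEdef, hPdef, comp_apply]
    rw [h2' x]
  have hEE : E * E = E := by
    ext x
    simp only [mul_apply, hEdef, comp_apply]
    exact hXY' (Ap x)
  have hQQ : Q * Q = Q := by ext x; simpa using hQ1' x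
  -- `Q` and `1 - E`
  have hFF : ((1 : H →L[ℂ] H) - E) * (1 - E) = 1 - E := by
    rw [sub_mul, one_mul, mul_sub, mul_one, hEE]
    simp
  have hFQ : ((1 : H →L[ℂ] H) - E) * Q = Q := by
    ext x
    have hx : Q x ∈ Set.range ((1 : H →L[ℂ] H) - E) := hQ3 ▸ Set.mem_range_self x
    obtain ⟨z, hz⟩ := hx
    calc (((1 : H →L[ℂ] H) - E) * Q) x = ((1 : H →L[ℂ] H) - E) (Q x) := rfl
      _ = (((1 : H →L[ℂ] H) - E) * ((1 : H →L[ℂ] H) - E)) z := by rw [← hz]; rfl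
      _ = ((1 : H →L[ℂ] H) - E) z := by rw [hFF]
      _ = Q x := hz
  have hQF : Q * ((1 : H →L[ℂ] H) - E) = (1 : H →L[ℂ] H) - E := by
    ext x
    have hx : ((1 : H →L[ℂ] H) - E) x ∈ Set.range Q := by
      rw [hQ3]; exact Set.mem_range_self x
    obtain ⟨z, hz⟩ := hx
    calc (Q * ((1 : H →L[ℂ] H) - E)) x = Q (((1 : H →L[ℂ] H) - E) x) := rfl
      _ = Q (Q z) := by rw [← hz]
      _ = Q z := hQ1' z
      _ = ((1 : H →L[ℂ] H) - E) x := hz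
  have hEQ : E * Q = 0 := by
    have h := hFQ
    rw [sub_mul, one_mul] at h
    exact sub_eq_self.mp h
  have hQE : Q * E = Q - (1 - E) := by
    have h := hQF
    rw [mul_sub, mul_one] at h
    rw [← h]; abel
  -- adjoints
  have hPs : star P = P := by rw [star_eq_adjoint]; exact h3
  have hQs : star Q = Q := by rw [star_eq_adjoint]; exact hQ2
  have hPEs : P * star E = star E := by
    have h := congrArg star hEP
    rwa [star_mul, hPs] at h
  have hEsQ : star E * Q = Q - (1 - star E) := by
    have h := congrArg star hQE
    rwa [star_mul, star_sub, star_sub, star_one, hQs] at h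
  have hPQ : P * Q = P + Q - 1 := by
    have key : P * (Q - (1 - star E)) = Q - (1 - star E) := by
      rw [← hEsQ, ← mul_assoc, hPEs]
    have h9 : P * Q - (P - star E) = Q - (1 - star E) := by
      calc P * Q - (P - star E)
          = P * (Q - (1 - star E)) := by rw [mul_sub, mul_sub, mul_one, hPEs]
        _ = Q - (1 - star E) := key
    have h10 : P * Q = Q - (1 - star E) + (P - star E) := by rw [← h9]; abel
    rw [h10]; abel
  have hQP : Q * P = P + Q - 1 := by
    have h := congrArg star hPQ
    rwa [star_mul, star_sub, star_add, star_one, hPs, hQs] at h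
  -- T = P - 1 + Q = P * Q
  have hTPQ : P - 1 + Q = P * Q := by rw [hPQ]; abel
  have hQT : Q * (P * Q) = P * Q := by
    rw [← mul_assoc, hQP, sub_mul, add_mul, one_mul, hQQ]
    abel
  have hTT : (P - 1 + Q) * (P - 1 + Q) = P - 1 + Q := by
    rw [hTPQ, mul_assoc, hQT, ← mul_assoc, hPP]
  -- G = P - E
  have hGP : (P - E) * P = P - E := by rw [sub_mul, hPP, hEP]
  have hPG : P * (P - E) = P - E := by rw [mul_sub, hPP, hPE]
  have hQG : Q * (P - E) = P - E := by rw [mul_sub, hQP, hQE]; abel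
  have hGQ : (P - E) * Q = P - 1 + Q := by rw [sub_mul, hPQ, hEQ]; abel
  have hTG : (P - 1 + Q) * (P - E) = P - E := by
    rw [hTPQ, mul_assoc, hQG, hPG]
  have hGT : (P - E) * (P - 1 + Q) = P - 1 + Q := by
    rw [hTPQ, ← mul_assoc, hGP, hGQ, hTPQ]
  refine ⟨hTT, ?_, ?_⟩
  · rw [← star_eq_adjoint, star_add, star_sub, star_one, hPs, hQs]
  · have hGsub : (A - Bo) ∘L Ap = P - E := by
      rw [sub_comp, ← hPdef, ← hEdef]
    rw [hGsub]
    apply Set.Subset.antisymm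
    · rintro x ⟨y, rfl⟩
      exact ⟨(P - 1 + Q) y, by rw [← ContinuousLinearMap.mul_apply, hGT]⟩
    · rintro x ⟨y, rfl⟩
      exact ⟨(P - E) y, by rw [← ContinuousLinearMap.mul_apply, hTG]⟩
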